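/- Let q ≥ 3 be a prime power and C a linear code of dimension k over GF(q) of length n, and let x ∈ GF(q)^n with x ∉ C such that the number of distinct Hamming distances from x to codewords of C is strictly less than q^k. Then there exists a linear code C' of dimension k (namely C with each coordinate tripled) and a vector x' ∉ C' such that the number of distinct Hamming distances from x' to codewords of C' is strictly greater than the number of distinct Hamming distances from x to codewords of C. -/

import Mathlib

/-- The linear map tripling each coordinate of a vector. -/
def tripleMap (F : Type*) [Field F] (n : ℕ) : (Fin n → F) →ₗ[F] (Fin (3 * n) → F) where
  toFun v := fun i => v ⟨i.1 / 3, by omega⟩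
  map_add' _ _ := rfl
  map_smul' _ _ := rfl

lemma sum_fin_triple {M : Type*} [AddCommMonoid M] {n : ℕ} (g : Fin (3 * n) → M) :
    ∑ j, g j = ∑ i : Fin n, ∑ t : Fin 3, g ⟨(t : ℕ) + 3 * (i : ℕ), by omega⟩ := by
  calc ∑ j, g j
      = ∑ p : Fin n × Fin 3, g ⟨(p.2 : ℕ) + 3 * (p.1 : ℕ), by omega⟩ :=
        (Fintype.sum_equiv (finProdFinEquiv.trans (finCongr (Nat.mul_comm n 3)))
          (fun p : Fin n × Fin 3 => g ⟨(p.2 : ℕ) + 3 * (p.1 : ℕ), by omega⟩) g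
          (fun p => by congr 1)).symm
    _ = ∑ i : Fin n, ∑ t : Fin 3, g ⟨(t : ℕ) + 3 * (i : ℕ), by omega⟩ :=
        Fintype.sum_prod_type _

lemma dist_triple {F : Type*} [Field F] [DecidableEq F] {n : ℕ} (c x : Fin n → F)
    (i0 : Fin n) (a : F) (ha : a ≠ 0) :
    hammingDist ((tripleMap F n) c)
        (fun j : Fin (3 * n) => x ⟨j.1 / 3, by omega⟩ + if j.1 = 3 * i0.1 then a else 0)
      + (if c i0 = x i0 then 0 else 1)
    = 3 * hammingDist c x + (if c i0 = x i0 + a then 0 else 1) := by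
  simp only [hammingDist, Finset.card_filter]
  rw [sum_fin_triple]
  have hval : ∀ (i : Fin n) (t : Fin 3),
      (tripleMap F n c) ⟨(t : ℕ) + 3 * (i : ℕ), by omega⟩ = c i := by
    intro i t
    show c _ = c i
    congr 1
    apply Fin.ext
    show ((t : ℕ) + 3 * (i : ℕ)) / 3 = i
    omega
  have hxv : ∀ (i : Fin n) (t : Fin 3),
      x (⟨((t : ℕ) + 3 * (i : ℕ)) / 3, by omega⟩ : Fin n) = x i := by
    intro i t
    congr 1
    apply Fin.ext
    show ((t : ℕ) + 3 * (i : ℕ)) / 3 = i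
    omega
  rw [← Finset.add_sum_erase _ _ (Finset.mem_univ i0),
      ← Finset.add_sum_erase _ (fun i => if c i ≠ x i then 1 else 0) (Finset.mem_univ i0)]
  have hrest : ∀ i ∈ Finset.univ.erase i0,
      (∑ t : Fin 3, if (tripleMap F n c) ⟨(t : ℕ) + 3 * (i : ℕ), by omega⟩ ≠
          x ⟨((t : ℕ) + 3 * (i : ℕ)) / 3, by omega⟩
            + (if (t : ℕ) + 3 * (i : ℕ) = 3 * i0.1 then a else 0) then 1 else 0)
      = 3 * (if c i ≠ x i then 1 else 0) := by
    intro i hi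
    have hne : (i : ℕ) ≠ (i0 : ℕ) := by
      intro h; exact (Finset.mem_erase.mp hi).1 (Fin.ext h)
    have : ∀ t : Fin 3, ((t : ℕ) + 3 * (i : ℕ) = 3 * i0.1) = False := by
      intro t; simp only [eq_iff_iff, iff_false]; omega
    simp only [hval, hxv, this, if_false, add_zero, Fin.sum_univ_three]
    split_ifs <;> ring
  rw [Finset.sum_congr rfl hrest]
  have h0 : ∀ t : Fin 3, ((t : ℕ) + 3 * (i0 : ℕ) = 3 * i0.1) = ((t : ℕ) = 0) := by
    intro t; simp only [eq_iff_iff]; omega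
  simp only [Fin.sum_univ_three, hval, hxv, h0]
  norm_num
  have hms : ∀ (u : Fin n → ℕ), ∑ i ∈ Finset.univ.erase i0, 3 * u i
      = 3 * ∑ i ∈ Finset.univ.erase i0, u i := fun u => (Finset.mul_sum _ _ _).symm
  have h3 : ∀ i : Fin n, (if c i = x i then (0:ℕ) else 3) = 3 * (if c i = x i then 0 else 1) := by
    intro i; split_ifs <;> ring
  simp only [h3, hms]
  set s := ∑ i ∈ Finset.univ.erase i0, (if c i = x i then (0:ℕ) else 1) with hs
  split_ifs <;> omega

theorem tripling_increases_distinct_distances {F : Type*} [Field F] [Fintype F] [DecidableEq F]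
    {n k : ℕ} (hq : 3 ≤ Fintype.card F)
    (C : Submodule F (Fin n → F)) (hk : Module.finrank F C = k)
    (x : Fin n → F) (hx : x ∉ C)
    (hlt : {d : ℕ | ∃ c ∈ C, hammingDist c x = d}.ncard < Fintype.card F ^ k) :
    ∃ x' : Fin (3 * n) → F, x' ∉ C.map (tripleMap F n) ∧
      {d : ℕ | ∃ c ∈ C, hammingDist c x = d}.ncard <
        {d : ℕ | ∃ c ∈ C.map (tripleMap F n), hammingDist c x' = d}.ncard := by
  classical
  set f : (Fin n → F) → ℕ := fun c => hammingDist c x with hf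
  have hD : {d : ℕ | ∃ c ∈ C, hammingDist c x = d} = f '' (C : Set (Fin n → F)) := by
    ext d; simp [Set.mem_image, hf]
  -- step 1: f is not injective on C
  have hcard : (C : Set (Fin n → F)).ncard = Fintype.card F ^ k := by
    have : Fintype ↥C := Fintype.ofFinite _
    have h1 : Nat.card ↥C = Fintype.card F ^ k := by
      rw [Nat.card_eq_fintype_card,
        show (Fintype.card ↥C : ℕ) = Fintype.card F ^ Module.finrank F ↥C from
          Module.card_eq_pow_finrank, hk]
    rw [← Nat.card_coe_set_eq]
    exact h1
  have hninj : ¬ Set.InjOn f (C : Set (Fin n → F)) := by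
    intro hinj
    rw [hD, Set.ncard_image_of_injOn hinj, hcard] at hlt
    exact lt_irrefl _ hlt
  rw [Set.InjOn] at hninj
  push_neg at hninj
  obtain ⟨c1, hc1, c2, hc2, hfe, hne⟩ := hninj
  obtain ⟨i0, hi0⟩ := Function.ne_iff.mp hne
  -- choose a and order (b1, b2) so b1 i0 = x i0 + a, b2 i0 ≠ x i0 + a
  obtain ⟨a, ha, b1, b2, hb1, hb2, hfb, hb1e, hb2e⟩ :
      ∃ a : F, a ≠ 0 ∧ ∃ b1 b2, b1 ∈ C ∧ b2 ∈ C ∧ f b1 = f b2 ∧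
        b1 i0 = x i0 + a ∧ b2 i0 ≠ x i0 + a := by
    by_cases h : c1 i0 = x i0
    · refine ⟨c2 i0 - x i0, ?_, c2, c1, hc2, hc1, hfe.symm, by ring, ?_⟩
      · intro h0
        exact hi0 (by linear_combination h - h0)
      · intro h1
        exact hi0 (by linear_combination h1)
    · exact ⟨c1 i0 - x i0, fun h0 => h (by linear_combination h0), c1, c2, hc1, hc2, hfe,
        by ring, fun h1 => hi0 (by linear_combination -h1)⟩
  -- the modified vector
  set x' : Fin (3 * n) → F :=
    fun j => x ⟨j.1 / 3, by omega⟩ + if j.1 = 3 * i0.1 then a else 0 with hx'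
  set g : (Fin n → F) → ℕ := fun c => hammingDist ((tripleMap F n) c) x' with hg
  have key : ∀ c ∈ C, g c + (if c i0 = x i0 then 0 else 1)
      = 3 * f c + (if c i0 = x i0 + a then 0 else 1) := fun c _ => dist_triple c x i0 a ha
  have hfpos : ∀ c ∈ C, 1 ≤ f c := by
    intro c hc
    have hcx : c ≠ x := fun h => hx (h ▸ hc)
    exact hammingDist_pos.mpr hcx
  set φ : ℕ → ℕ := fun v => (v + 1) / 3 with hφ
  have hphi : ∀ c ∈ C, φ (g c) = f c := by
    intro c hc
    have h1 := key c hc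
    have h2 := hfpos c hc
    show (g c + 1) / 3 = f c
    split_ifs at h1 <;> omega
  have hD' : {d : ℕ | ∃ c ∈ C.map (tripleMap F n), hammingDist c x' = d}
      = g '' (C : Set (Fin n → F)) := by
    ext d
    simp only [Set.mem_setOf_eq, Set.mem_image, SetLike.mem_coe, Submodule.mem_map, hg]
    constructor
    · rintro ⟨c', ⟨c, hc, rfl⟩, rfl⟩; exact ⟨c, hc, rfl⟩
    · rintro ⟨c, hc, rfl⟩; exact ⟨tripleMap F n c, ⟨c, hc, rfl⟩, rfl⟩
  have hD'fin : (g '' (C : Set (Fin n → F))).Finite := (Set.toFinite _).image _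
  have hx'notin : x' ∉ C.map (tripleMap F n) := by
    rintro ⟨c, hc, hceq⟩
    have h1 := key c hc
    have h2 := hfpos c hc
    have h3 : g c = 0 := by
      rw [hg]; simp only [hceq]; exact hammingDist_self x'
    split_ifs at h1 <;> omega
  refine ⟨x', hx'notin, ?_⟩
  rw [hD, hD']
  have hb1x : b1 i0 ≠ x i0 := by
    rw [hb1e]; intro hh; exact ha (by linear_combination hh)
  have hgne : g b1 ≠ g b2 := by
    have h1 := key b1 hb1
    have h2 := key b2 hb2
    rw [if_neg hb1x, if_pos hb1e] at h1
    rw [if_neg hb2e] at h2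
    rw [hfb] at h1
    split_ifs at h2 <;> omega
  have hsub : f '' (C : Set (Fin n → F)) ⊆ φ '' (g '' (C : Set (Fin n → F)) \ {g b1}) := by
    rintro d ⟨c, hc, rfl⟩
    by_cases hgc : g c = g b1
    · refine ⟨g b2, ⟨⟨b2, hb2, rfl⟩, by simpa using (Ne.symm hgne)⟩, ?_⟩
      rw [hphi b2 hb2, ← hfb, ← hphi b1 hb1, ← hgc, hphi c hc]
    · exact ⟨g c, ⟨⟨c, hc, rfl⟩, hgc⟩, hphi c hc⟩
  calc (f '' (C : Set (Fin n → F))).ncard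
      ≤ (φ '' (g '' (C : Set (Fin n → F)) \ {g b1})).ncard :=
        Set.ncard_le_ncard hsub ((hD'fin.diff).image _)
    _ ≤ (g '' (C : Set (Fin n → F)) \ {g b1}).ncard := Set.ncard_image_le (hD'fin.diff)
    _ < (g '' (C : Set (Fin n → F))).ncard :=
        Set.ncard_diff_singleton_lt_of_mem ⟨b1, hb1, rfl⟩ hD'fin
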